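/- Let B ∈ C^{n×n} with B_H ≥ 0, B_A = (B-B*)/2. For each m ∈ ℕ₀, the matrix Σ_{j=0}^m B_A^j B_H (B_A*)^j is positive definite if and only if Σ_{j=0}^m B^j B_H (B*)^j is positive definite, if and only if Σ_{j=0}^m (B*)^j B_H B^j is positive definite. -/

import Mathlib

open Matrix
open scoped ComplexOrder

private lemma sum_mulVec' {n : ℕ} (s : Finset ℕ) (M : ℕ → Matrix (Fin n) (Fin n) ℂ)
    (x : Fin n → ℂ) : (∑ j ∈ s, M j) *ᵥ x = ∑ j ∈ s, (M j *ᵥ x) := by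
  ext i
  simp only [mulVec, dotProduct, Matrix.sum_apply, Finset.sum_apply, Finset.sum_mul]
  rw [Finset.sum_comm]

private lemma dotProduct_sum' {n : ℕ} (s : Finset ℕ) (v : Fin n → ℂ)
    (w : ℕ → Fin n → ℂ) : v ⬝ᵥ (∑ j ∈ s, w j) = ∑ j ∈ s, v ⬝ᵥ w j := by
  simp only [dotProduct, Finset.sum_apply, Finset.mul_sum]
  rw [Finset.sum_comm]

private lemma key_pow {n : ℕ} (H A : Matrix (Fin n) (Fin n) ℂ) (x : Fin n → ℂ) (m : ℕ)
    (h : ∀ j ≤ m, H *ᵥ (A ^ j *ᵥ x) = 0) :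
    ∀ j ≤ m + 1, (H + A) ^ j *ᵥ x = A ^ j *ᵥ x := by
  intro j
  induction j with
  | zero => simp
  | succ j ih =>
    intro hj
    have hj' : j ≤ m := Nat.lt_succ_iff.mp hj
    rw [pow_succ', pow_succ', ← mulVec_mulVec, ← mulVec_mulVec,
      ih (le_trans hj' (Nat.le_succ m)), add_mulVec, h j hj', zero_add]

private lemma equiv1 {n : ℕ} (H A : Matrix (Fin n) (Fin n) ℂ) (x : Fin n → ℂ) (m : ℕ) :
    (∀ j ≤ m, H *ᵥ (A ^ j *ᵥ x) = 0) ↔ (∀ j ≤ m, H *ᵥ ((H + A) ^ j *ᵥ x) = 0) := by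
  constructor
  · intro h j hj
    rw [key_pow H A x m h j (le_trans hj (Nat.le_succ m)), h j hj]
  · intro h j hj
    have h' : ∀ j ≤ m, (-H) *ᵥ ((H + A) ^ j *ᵥ x) = 0 := by
      intro j hj; rw [neg_mulVec, h j hj, neg_zero]
    have hkey := key_pow (-H) (H + A) x m h' j (le_trans hj (Nat.le_succ m))
    rw [neg_add_cancel_left] at hkey
    rw [hkey]; exact h j hj

private lemma neg_cond {n : ℕ} (H A : Matrix (Fin n) (Fin n) ℂ) (x : Fin n → ℂ) (m : ℕ) :
    (∀ j ≤ m, H *ᵥ ((-A) ^ j *ᵥ x) = 0) ↔ (∀ j ≤ m, H *ᵥ (A ^ j *ᵥ x) = 0) := by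
  have hpow : ∀ j : ℕ, (-A) ^ j = ((-1 : ℂ) ^ j) • A ^ j := by
    intro j
    rw [← smul_pow, neg_smul, one_smul]
  constructor <;> intro h j hj <;> have hh := h j hj
  · rw [hpow, smul_mulVec, mulVec_smul, smul_eq_zero] at hh
    rcases hh with h' | h'
    · exact absurd h' (pow_ne_zero j (by norm_num))
    · exact h'
  · rw [hpow, smul_mulVec, mulVec_smul, hh, smul_zero]

private lemma quad_eq {n : ℕ} (H C : Matrix (Fin n) (Fin n) ℂ) (x : Fin n → ℂ) (j : ℕ) :
    star x ⬝ᵥ (C ^ j * H * (Cᴴ) ^ j) *ᵥ x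
      = star ((Cᴴ) ^ j *ᵥ x) ⬝ᵥ (H *ᵥ ((Cᴴ) ^ j *ᵥ x)) := by
  simp only [star_mulVec, conjTranspose_pow, conjTranspose_conjTranspose,
    dotProduct_mulVec, vecMul_vecMul, Matrix.mul_assoc]

private lemma crit {n : ℕ} (H C : Matrix (Fin n) (Fin n) ℂ) (hH : H.PosSemidef) (m : ℕ) :
    (∑ j ∈ Finset.range (m + 1), C ^ j * H * (Cᴴ) ^ j).PosDef ↔
      ∀ x : Fin n → ℂ, (∀ j ≤ m, H *ᵥ ((Cᴴ) ^ j *ᵥ x) = 0) → x = 0 := by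
  have hterm : ∀ j : ℕ, (C ^ j * H * (Cᴴ) ^ j).PosSemidef := by
    intro j
    rw [← conjTranspose_pow]
    exact hH.mul_mul_conjTranspose_same _
  have hPSD : (∑ j ∈ Finset.range (m + 1), C ^ j * H * (Cᴴ) ^ j).PosSemidef := by
    exact Finset.sum_induction _ (fun M : Matrix (Fin n) (Fin n) ℂ => M.PosSemidef)
      (fun _ _ ha hb => ha.add hb) Matrix.PosSemidef.zero (fun j _ => hterm j)
  constructor
  · intro hPD x hx
    by_contra hx0
    have hlt := hPD.dotProduct_mulVec_pos hx0
    have hzero : (∑ j ∈ Finset.range (m + 1), C ^ j * H * (Cᴴ) ^ j) *ᵥ x = 0 := by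
      rw [sum_mulVec']
      apply Finset.sum_eq_zero
      intro j hj
      rw [← mulVec_mulVec, ← mulVec_mulVec, hx j (Nat.lt_succ_iff.mp (Finset.mem_range.mp hj)),
        mulVec_zero]
    rw [hzero, dotProduct_zero] at hlt
    exact lt_irrefl _ hlt
  · intro hk
    refine PosDef.of_dotProduct_mulVec_pos hPSD.1 (fun x hx => ?_)
    refine lt_of_le_of_ne (hPSD.dotProduct_mulVec_nonneg x) (fun heq => ?_)
    apply hx
    apply hk
    intro j hj
    have hsum : ∑ j ∈ Finset.range (m + 1), star x ⬝ᵥ (C ^ j * H * (Cᴴ) ^ j) *ᵥ x = 0 := by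
      rw [← dotProduct_sum', ← sum_mulVec']
      exact heq.symm
    have hterm0 := (Finset.sum_eq_zero_iff_of_nonneg
      (fun j _ => (hterm j).dotProduct_mulVec_nonneg x)).mp hsum j (Finset.mem_range.mpr (Nat.lt_succ_of_le hj))
    rw [quad_eq] at hterm0
    exact (hH.dotProduct_mulVec_zero_iff _).mp hterm0

/-- `Σ B_A^j B_H (B_A*)^j > 0` iff `Σ B^j B_H (B*)^j > 0` iff `Σ (B*)^j B_H B^j > 0`. -/
theorem Tm_posDef_tfae {n : ℕ} (B : Matrix (Fin n) (Fin n) ℂ)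
    (hBH : ((1/2 : ℂ) • (B + Bᴴ)).PosSemidef) (m : ℕ) :
    ((∑ j ∈ Finset.range (m+1),
        ((1/2 : ℂ) • (B - Bᴴ)) ^ j * ((1/2 : ℂ) • (B + Bᴴ)) *
          (((1/2 : ℂ) • (B - Bᴴ))ᴴ) ^ j).PosDef
      ↔ (∑ j ∈ Finset.range (m+1),
          B ^ j * ((1/2 : ℂ) • (B + Bᴴ)) * (Bᴴ) ^ j).PosDef) ∧
    ((∑ j ∈ Finset.range (m+1),
        B ^ j * ((1/2 : ℂ) • (B + Bᴴ)) * (Bᴴ) ^ j).PosDef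
      ↔ (∑ j ∈ Finset.range (m+1),
          (Bᴴ) ^ j * ((1/2 : ℂ) • (B + Bᴴ)) * B ^ j).PosDef) := by
  set H : Matrix (Fin n) (Fin n) ℂ := (1/2 : ℂ) • (B + Bᴴ) with hHdef
  set A : Matrix (Fin n) (Fin n) ℂ := (1/2 : ℂ) • (B - Bᴴ) with hAdef
  have hAH : Aᴴ = -A := by
    rw [hAdef, conjTranspose_smul, conjTranspose_sub, conjTranspose_conjTranspose]
    simp only [star_div₀, star_one, RCLike.star_def, map_ofNat]
    module
  have hB : H + A = B := by rw [hHdef, hAdef]; module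
  have hBstar : H + (-A) = Bᴴ := by rw [hHdef, hAdef]; module
  -- kernel conditions
  have hcondA : ∀ x : Fin n → ℂ,
      (∀ j ≤ m, H *ᵥ ((Aᴴ) ^ j *ᵥ x) = 0) ↔ (∀ j ≤ m, H *ᵥ ((Bᴴ) ^ j *ᵥ x) = 0) := by
    intro x
    rw [hAH, ← hBstar]
    exact (neg_cond H A x m).trans ((neg_cond H A x m).symm.trans (equiv1 H (-A) x m))
  have hcondB : ∀ x : Fin n → ℂ,
      (∀ j ≤ m, H *ᵥ ((Bᴴ) ^ j *ᵥ x) = 0) ↔ (∀ j ≤ m, H *ᵥ (B ^ j *ᵥ x) = 0) := by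
    intro x
    rw [← hBstar, ← hB]
    exact (equiv1 H (-A) x m).symm.trans ((neg_cond H A x m).trans (equiv1 H A x m))
  constructor
  · rw [crit H A hBH m, crit H B hBH m]
    exact forall_congr' fun x => imp_congr_left (hcondA x)
  · rw [crit H B hBH m]
    have h3 := crit H (Bᴴ) hBH m
    simp only [conjTranspose_conjTranspose] at h3
    rw [h3]
    exact forall_congr' fun x => imp_congr_left (hcondB x)
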